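/- Let A : ℓ¹(ℕ) → Y be a bounded linear operator whose range is not closed (ill-posedness). Suppose A satisfies the restricted injectivity property with constants γ_n, i.e., ‖Ax‖ ≥ γ_n⁻¹‖x‖₁ for all x with |supp x| ≤ n. Then the sequence (γ_n) is unbounded, i.e., γ_n → ∞ as n → ∞. -/

import Mathlib

open Filter

noncomputable section

abbrev L1 : Type := lp (fun _ : ℕ => ℝ) 1

def SuppLe (x : L1) (n : ℕ) : Prop :=
  ∃ s : Finset ℕ, s.card ≤ n ∧ ∀ k ∉ s, (x : ℕ → ℝ) k = 0

/-- If `A` has non-closed range (ill-posedness) and satisfies the restricted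
injectivity property with constants `γ n`, then `γ n → ∞`. -/
theorem stmt2 {Y : Type*} [NormedAddCommGroup Y] [NormedSpace ℝ Y] [CompleteSpace Y]
    (A : L1 →L[ℝ] Y) (hrange : ¬ IsClosed (Set.range A))
    (γ : ℕ → ℝ) (hγpos : ∀ n, 0 < γ n)
    (hRIP : ∀ n, ∀ x : L1, SuppLe x n → ‖A x‖ ≥ (γ n)⁻¹ * ‖x‖) :
    Tendsto γ atTop atTop := by
  by_contra h
  rw [tendsto_atTop] at h
  push_neg at h
  obtain ⟨b, hb⟩ := h
  rw [frequently_atTop] at hb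
  have hb0 : 0 < b := by
    obtain ⟨n, -, hn⟩ := hb 0
    exact (hγpos n).trans hn
  -- key bound for finitely supported elements
  have key : ∀ m : ℕ, ∀ x : L1, SuppLe x m → b⁻¹ * ‖x‖ ≤ ‖A x‖ := by
    intro m x hx
    obtain ⟨n, hnm, hn⟩ := hb m
    obtain ⟨s, hs, hsup⟩ := hx
    have : SuppLe x n := ⟨s, hs.trans hnm, hsup⟩
    calc b⁻¹ * ‖x‖ ≤ (γ n)⁻¹ * ‖x‖ :=
          mul_le_mul_of_nonneg_right
            (inv_anti₀ (hγpos n) hn.le) (norm_nonneg _)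
      _ ≤ ‖A x‖ := hRIP n x this
  -- extend to all x by density
  have key' : ∀ x : L1, b⁻¹ * ‖x‖ ≤ ‖A x‖ := by
    intro x
    have hsum : HasSum (fun i : ℕ => lp.single 1 i ((x : ℕ → ℝ) i)) x :=
      lp.hasSum_single (by norm_num) x
    have htend := hsum.tendsto_sum_nat
    set S : ℕ → L1 := fun n => ∑ i ∈ Finset.range n, lp.single 1 i ((x : ℕ → ℝ) i) with hS
    have hSn : ∀ n, SuppLe (S n) n := by
      intro n
      refine ⟨Finset.range n, le_of_eq (Finset.card_range n), fun k hk => ?_⟩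
      have : (S n : ℕ → ℝ) k = ∑ i ∈ Finset.range n, (lp.single 1 i ((x : ℕ → ℝ) i) : ℕ → ℝ) k := by
        rw [hS, lp.coeFn_sum, Finset.sum_apply]
      rw [this]
      refine Finset.sum_eq_zero fun i hi => ?_
      exact lp.single_apply_ne 1 i _ (fun hki => hk (hki ▸ hi))
    have h1 : Tendsto (fun n => b⁻¹ * ‖S n‖) atTop (nhds (b⁻¹ * ‖x‖)) :=
      (htend.norm.const_mul _)
    have h2 : Tendsto (fun n => ‖A (S n)‖) atTop (nhds ‖A x‖) :=
      ((A.continuous.tendsto x).comp htend).norm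
    exact le_of_tendsto_of_tendsto' h1 h2 fun n => key n (S n) (hSn n)
  -- antilipschitz ⇒ closed range, contradiction
  have hanti : AntilipschitzWith b.toNNReal A := by
    refine A.antilipschitz_of_bound fun x => ?_
    have := key' x
    rw [Real.coe_toNNReal b hb0.le]
    calc ‖x‖ = b * (b⁻¹ * ‖x‖) := by field_simp
      _ ≤ b * ‖A x‖ := mul_le_mul_of_nonneg_left (key' x) hb0.le
  exact hrange (hanti.isClosed_range A.uniformContinuous)
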